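/- Let W(k) denote the Weibull distribution function F_k(t) = 1 − exp(−t^k) on (0,∞) with shape k > 0. For 0 < k < ℓ with distribution functions F = F_k, G = F_ℓ, one has R_{FG}(t) = G^{-1}(F(t)) = t^{k/ℓ}. Consequently: (a) F ≤₃ G holds for all 0 < k < ℓ; (b) G ≤₃ F (hence F =₃ G) holds if and only if ℓ ≥ 2k. -/

import Mathlib

lemma d1 (p : ℝ) {t : ℝ} (ht : 0 < t) :
    deriv (fun s : ℝ => s ^ p) t = p * t ^ (p - 1) :=
  Real.deriv_rpow_const t p

lemma d2 (p : ℝ) {t : ℝ} (ht : 0 < t) :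
    deriv (deriv (fun s : ℝ => s ^ p)) t = p * (p - 1) * t ^ (p - 2) := by
  have h : deriv (fun s : ℝ => s ^ p) =ᶠ[nhds t] fun s => p * s ^ (p - 1) := by
    filter_upwards [isOpen_Ioi.mem_nhds ht] with s hs using d1 p hs
  rw [h.deriv_eq, deriv_const_mul _ (Real.differentiableAt_rpow_const_of_ne _ ht.ne'),
    d1 (p - 1) ht, show p - 1 - 1 = p - 2 by ring]
  ring

lemma d3 (p : ℝ) {t : ℝ} (ht : 0 < t) :
    deriv (deriv (deriv (fun s : ℝ => s ^ p))) t
      = p * (p - 1) * (p - 2) * t ^ (p - 3) := by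
  have h : deriv (deriv (fun s : ℝ => s ^ p)) =ᶠ[nhds t]
      fun s => p * (p - 1) * s ^ (p - 2) := by
    filter_upwards [isOpen_Ioi.mem_nhds ht] with s hs using d2 p hs
  rw [h.deriv_eq, deriv_const_mul _ (Real.differentiableAt_rpow_const_of_ne _ ht.ne'),
    d1 (p - 2) ht, show p - 2 - 1 = p - 3 by ring]
  ring

/-- For Weibull distributions `W(k)` with cdf
`F_k t = 1 - exp(-t^k)` on `(0,∞)` and `0 < k < ℓ` (with `F = F_k`,
`G = F_ℓ`, `G⁻¹ p = (-log(1-p))^{1/ℓ}`): `R_{FG} t = G⁻¹(F t) = t^{k/ℓ}`;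
(a) `F ≤₃ G` always holds; (b) `G ≤₃ F` (equivalently, together with (a),
`F =₃ G`) holds iff `ℓ ≥ 2k`. -/
theorem stmt12 (k ℓ : ℝ) (hk : 0 < k) (hkl : k < ℓ) :
    -- R_{FG}(t) = G⁻¹(F(t)) = t^{k/ℓ}
    (∀ t : ℝ, 0 < t →
      (-Real.log (1 - (1 - Real.exp (-(t ^ k))))) ^ (1/ℓ) = t ^ (k/ℓ)) ∧
    -- (a) F ≤₃ G: R_{FG}''' ≥ 0 on (0,∞)
    (∀ t : ℝ, 0 < t →
      0 ≤ deriv (deriv (deriv (fun s : ℝ => s ^ (k/ℓ)))) t) ∧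
    -- (b) G ≤₃ F ⟺ ℓ ≥ 2k
    ((∀ t : ℝ, 0 < t →
      deriv (deriv (deriv (fun s : ℝ => s ^ (k/ℓ)))) t
        ≤ 3 * (deriv (deriv (fun s : ℝ => s ^ (k/ℓ))) t)^2
            / deriv (fun s : ℝ => s ^ (k/ℓ)) t)
      ↔ 2*k ≤ ℓ) := by
  have hℓ : 0 < ℓ := hk.trans hkl
  set p : ℝ := k / ℓ with hpdef
  have hp : 0 < p := div_pos hk hℓ
  have hp1 : p < 1 := (div_lt_one hℓ).mpr hkl
  refine ⟨fun t ht => ?_, fun t ht => ?_, ?_⟩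
  · rw [sub_sub_cancel, Real.log_exp, neg_neg, ← Real.rpow_mul ht.le]
    congr 1
    rw [hpdef, mul_one_div]
  · rw [d3 p ht]
    have htp : 0 < t ^ (p - 3) := Real.rpow_pos_of_pos ht _
    nlinarith [mul_pos (mul_pos_of_neg_of_neg (show p - 1 < 0 by linarith)
      (show p - 2 < 0 by linarith)) htp]
  · constructor
    · intro h
      have h1 := h 1 one_pos
      rw [d1 p one_pos, d2 p one_pos, d3 p one_pos, Real.one_rpow, Real.one_rpow,
        Real.one_rpow] at h1
      rw [le_div_iff₀ (by positivity)] at h1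
      have h2p : 2 * p ≤ 1 := by
        by_contra hc
        push_neg at hc
        nlinarith [mul_pos (mul_pos hp hp) (mul_pos (show (0:ℝ) < 2*p - 1 by linarith)
          (show (0:ℝ) < 1 - p by linarith))]
      have h2p' : 2 * k / ℓ ≤ 1 := by rw [hpdef] at h2p; linear_combination h2p
      exact (div_le_one hℓ).mp h2p'
    · intro h2k t ht
      have h2p : 2 * p ≤ 1 := by
        rw [hpdef, show 2 * (k / ℓ) = 2 * k / ℓ by ring, div_le_one hℓ]
        exact h2k
      rw [d1 p ht, d2 p ht, d3 p ht]
      have htp : 0 < t ^ (p - 3) := Real.rpow_pos_of_pos ht _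
      have htp1 : 0 < t ^ (p - 1) := Real.rpow_pos_of_pos ht _
      have key : 3 * (p * (p - 1) * t ^ (p - 2)) ^ 2 / (p * t ^ (p - 1))
          = 3 * p * (p - 1) ^ 2 * t ^ (p - 3) := by
        have e1 : t ^ (p - 2) * t ^ (p - 2) = t ^ (p - 3) * t ^ (p - 1) := by
          rw [← Real.rpow_add ht, ← Real.rpow_add ht]
          congr 1
          ring
        rw [div_eq_iff (by positivity)]
        linear_combination (3 * p^2 * (p-1)^2) * e1
      rw [key]
      have hcoef : p * (p - 1) * (p - 2) ≤ 3 * p * (p - 1) ^ 2 := by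
        nlinarith [mul_nonneg hp.le (mul_nonneg_of_nonpos_of_nonpos
          (show p - 1 ≤ 0 by linarith) (show 2*p - 1 ≤ 0 by linarith))]
      nlinarith [mul_le_mul_of_nonneg_right hcoef htp.le]
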